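/- With the data and definitions below, the Lagrangian-relaxed dynamic program admits the closed form: for every stage i with 1 ≤ i ≤ N and every capacity vector κ : C × L → ℝ, Ĵ(κ, i) = ∑_{k=i}^{N} ∑_{t∈T} λ_t·max( 0, max_{c∈C} ( (∏_{j=i}^{k−1} s_j)·p_t − R_i·∑_{ℓ∈L} q_{t,ℓ}·η_{ℓ,c} ) ) + R_i·∑_{ℓ∈L} ∑_{c∈C} η_{ℓ,c}·κ_{c,ℓ}, where R_i = ∏_{j=i}^{N−1} s_j (so R_N = 1 and the empty product in the k = i summand is 1). -/

import Mathlib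

/-!
Closed form for the Lagrangian-relaxed dynamic program in the coach reservation problem
with known arrival rates.
-/

/-- Resource consumption of assigning a request of type `t` to the coach in the given
`Option C` decision: `Δ(t, some c)` consumes `q t ℓ` seats of coach `c` on every leg `ℓ`,
and `Δ(t, none) = 0`. -/
def lagDelta {T C L : Type*} [DecidableEq C] (q : T → L → ℝ) (t : T) :
    Option C → (C × L → ℝ)
  | none => fun _ => 0
  | some c => fun cl => if cl.1 = c then q t cl.2 else 0

/-- The Lagrangian-relaxed dynamic program (capacity constraints dropped, penalized only at
the final stage) with multipliers `η`, indexed so that `lagJ lam p q s η N k κ` is the value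
`Ĵ(κ, i)` at stage `i = N − k`:
`Ĵ(κ, N) = max over all u of ∑ t, λ_t·(p_t·1[u t ≠ none] +
  ∑ ℓ, ∑ c, η_{ℓ,c}·(κ_{c,ℓ} − q_{t,ℓ}·1[u t = some c]))`, and for `1 ≤ i < N`,
`Ĵ(κ, i) = max over all u of ∑ t, λ_t·(p_t·1[u t ≠ none] + s_i·Ĵ(κ − Δ(t, u t), i+1))`;
maxima are taken as suprema of the (finite, nonempty) sets of achievable values. -/
noncomputable def lagJ {T C L : Type*} [Fintype T] [Fintype L] [Fintype C] [DecidableEq C]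
    (lam p : T → ℝ) (q : T → L → ℝ) (s : ℕ → ℝ) (η : L → C → ℝ) (N : ℕ) :
    ℕ → (C × L → ℝ) → ℝ
  | 0, κ =>
      sSup { v : ℝ | ∃ u : T → Option C,
        v = ∑ t, lam t * ((if u t = none then 0 else p t) +
              ∑ ℓ, ∑ c, η ℓ c * (κ (c, ℓ) - q t ℓ * (if u t = some c then 1 else 0))) }
  | (k + 1), κ =>
      sSup { v : ℝ | ∃ u : T → Option C,
        v = ∑ t, lam t * ((if u t = none then 0 else p t) +
              s (N - (k + 1)) * lagJ lam p q s η N k (κ - lagDelta q t (u t))) }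

lemma lagAux_sSup_sum_eq {T α : Type*} [Fintype T] [Fintype α] [Nonempty α] (F : T → α → ℝ) :
    sSup {v : ℝ | ∃ u : T → α, v = ∑ t, F t (u t)}
      = ∑ t, Finset.univ.sup' Finset.univ_nonempty (F t) := by
  apply IsGreatest.csSup_eq
  constructor
  · choose g hg1 hg2 using fun t => Finset.exists_mem_eq_sup' (Finset.univ_nonempty (α := α)) (F t)
    exact ⟨g, Finset.sum_congr rfl fun t _ => hg2 t⟩
  · rintro v ⟨u, rfl⟩
    exact Finset.sum_le_sum fun t _ => Finset.le_sup' (F t) (Finset.mem_univ (u t))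

open Finset in
lemma lagAux_sup'_option {C : Type*} [Fintype C] [Nonempty C] (G : Option C → ℝ) :
    Finset.univ.sup' Finset.univ_nonempty G
      = max (G none) (Finset.univ.sup' Finset.univ_nonempty (fun c => G (some c))) := by
  apply le_antisymm
  · apply Finset.sup'_le
    rintro (_|c) _
    · exact le_max_left _ _
    · exact le_trans (Finset.le_sup' (fun c => G (some c)) (mem_univ c)) (le_max_right _ _)
  · exact max_le (Finset.le_sup' G (mem_univ none))
      (Finset.sup'_le _ _ fun c _ => Finset.le_sup' G (mem_univ (some c)))

lemma lagAux_mul_sup' {ι : Type*} (s : Finset ι) (H : s.Nonempty) (f : ι → ℝ) {a : ℝ}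
    (ha : 0 ≤ a) : a * s.sup' H f = s.sup' H (fun b => a * f b) :=
  Finset.comp_sup'_eq_sup'_comp H (fun x => a * x) (fun x y => mul_max_of_nonneg x y ha)

lemma lagAux_add_sup' {ι : Type*} (s : Finset ι) (H : s.Nonempty) (f : ι → ℝ) (a : ℝ) :
    a + s.sup' H f = s.sup' H (fun b => a + f b) :=
  Finset.comp_sup'_eq_sup'_comp H (fun x => a + x) (fun x y => (max_add_add_left a x y).symm)

open Finset in
lemma lagAux_optionSup {C : Type*} [Fintype C] [Nonempty C] [DecidableEq C] (a pt B : ℝ)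
    (ha : 0 ≤ a) (cost : C → ℝ) :
    Finset.univ.sup' Finset.univ_nonempty
      (fun o : Option C => a * ((if o = none then 0 else pt) + (B - o.elim 0 cost)))
    = a * (max 0 (Finset.univ.sup' Finset.univ_nonempty fun c => pt - cost c) + B) := by
  rw [lagAux_sup'_option]
  set S := Finset.univ.sup' Finset.univ_nonempty fun c : C => pt - cost c with hS
  have hnone : a * ((if (none : Option C) = none then 0 else pt)
      + (B - (none : Option C).elim 0 cost)) = a * B := by simp
  have hsome : (Finset.univ.sup' Finset.univ_nonempty fun c : C =>
      a * ((if (some c : Option C) = none then 0 else pt) + (B - (some c : Option C).elim 0 cost)))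
      = a * (B + S) := by
    rw [hS, lagAux_add_sup', lagAux_mul_sup' _ _ _ ha]
    apply Finset.sup'_congr _ rfl
    intro c _
    simp only [reduceCtorEq, if_false, Option.elim]
    ring
  rw [hnone, hsome, ← mul_max_of_nonneg _ _ ha]
  congr 1
  rcases le_total 0 S with h | h
  · rw [max_eq_right h, max_eq_right (by linarith)]; ring
  · rw [max_eq_left h, max_eq_left (by linarith)]; ring

lemma lagAux_inner_base {T C L : Type*} [Fintype C] [DecidableEq C] [Fintype L]
    (q : T → L → ℝ) (η : L → C → ℝ) (κ : C × L → ℝ) (t : T) (o : Option C) :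
    (∑ ℓ, ∑ c, η ℓ c * (κ (c, ℓ) - q t ℓ * (if o = some c then 1 else 0)))
      = (∑ ℓ, ∑ c, η ℓ c * κ (c, ℓ)) - o.elim 0 (fun c => ∑ ℓ, q t ℓ * η ℓ c) := by
  rcases o with _ | c0
  · simp
  · simp only [Option.some.injEq, Option.elim, mul_sub, Finset.sum_sub_distrib, mul_ite,
      mul_one, mul_zero]
    congr 1
    refine Finset.sum_congr rfl fun ℓ _ => ?_
    rw [Finset.sum_ite_eq]
    simp [mul_comm]

lemma lagAux_inner_step {T C L : Type*} [Fintype C] [DecidableEq C] [Fintype L]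
    (q : T → L → ℝ) (η : L → C → ℝ) (κ : C × L → ℝ) (t : T) (o : Option C) :
    (∑ ℓ, ∑ c, η ℓ c * ((κ - lagDelta q t o) (c, ℓ)))
      = (∑ ℓ, ∑ c, η ℓ c * κ (c, ℓ)) - o.elim 0 (fun c => ∑ ℓ, q t ℓ * η ℓ c) := by
  rcases o with _ | c0
  · simp [lagDelta]
  · simp only [lagDelta, Pi.sub_apply, Option.elim, mul_sub, Finset.sum_sub_distrib, mul_ite,
      mul_zero]
    congr 1
    refine Finset.sum_congr rfl fun ℓ _ => ?_
    rw [Finset.sum_ite_eq']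
    simp [mul_comm]

open Finset in
lemma lagJ_key {T C L : Type*}
    [Fintype T] [Nonempty T] [Fintype C] [Nonempty C] [DecidableEq C]
    [Fintype L] [Nonempty L]
    (lam p : T → ℝ) (hlam : ∀ t, 0 ≤ lam t) (hlamsum : ∑ t, lam t = 1)
    (q : T → L → ℝ) (N : ℕ) (s : ℕ → ℝ) (hs0 : ∀ j, 1 ≤ j → j < N → 0 ≤ s j)
    (η : L → C → ℝ) :
    ∀ d, d < N → ∀ κ : C × L → ℝ, lagJ lam p q s η N d κ =
      (∑ k ∈ Finset.Icc (N - d) N, ∑ t, lam t *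
          max 0 (Finset.univ.sup' Finset.univ_nonempty (fun c : C =>
            (∏ j ∈ Finset.Ico (N - d) k, s j) * p t
              - (∏ j ∈ Finset.Ico (N - d) N, s j) * ∑ ℓ, q t ℓ * η ℓ c)))
        + (∏ j ∈ Finset.Ico (N - d) N, s j) * ∑ ℓ, ∑ c, η ℓ c * κ (c, ℓ) := by
  intro d
  induction d with
  | zero =>
    intro _ κ
    have hb : lagJ lam p q s η N 0 κ = ∑ t, Finset.univ.sup' Finset.univ_nonempty
        (fun o : Option C => lam t * ((if o = none then 0 else p t) +
          ∑ ℓ, ∑ c, η ℓ c * (κ (c, ℓ) - q t ℓ * (if o = some c then 1 else 0)))) := by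
      rw [lagJ]
      exact lagAux_sSup_sum_eq (fun t (o : Option C) => lam t * ((if o = none then 0 else p t) +
          ∑ ℓ, ∑ c, η ℓ c * (κ (c, ℓ) - q t ℓ * (if o = some c then 1 else 0))))
    have hpt : ∀ t, Finset.univ.sup' Finset.univ_nonempty
        (fun o : Option C => lam t * ((if o = none then 0 else p t) +
          ∑ ℓ, ∑ c, η ℓ c * (κ (c, ℓ) - q t ℓ * (if o = some c then 1 else 0))))
        = lam t * (max 0 (Finset.univ.sup' Finset.univ_nonempty
            (fun c : C => p t - ∑ ℓ, q t ℓ * η ℓ c)) + ∑ ℓ, ∑ c, η ℓ c * κ (c, ℓ)) := by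
      intro t
      have heq : (fun o : Option C => lam t * ((if o = none then 0 else p t) +
          ∑ ℓ, ∑ c, η ℓ c * (κ (c, ℓ) - q t ℓ * (if o = some c then 1 else 0))))
          = (fun o : Option C => lam t * ((if o = none then 0 else p t) +
            ((∑ ℓ, ∑ c, η ℓ c * κ (c, ℓ)) - o.elim 0 (fun c => ∑ ℓ, q t ℓ * η ℓ c)))) := by
        funext o
        rw [lagAux_inner_base]
      rw [heq]
      exact lagAux_optionSup (lam t) (p t) _ (hlam t) _
    rw [hb]
    simp only [hpt]
    simp only [Nat.sub_zero, Finset.Icc_self, Finset.sum_singleton, Finset.Ico_self,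
      Finset.prod_empty, one_mul, mul_add, Finset.sum_add_distrib, ← Finset.sum_mul, hlamsum]
  | succ d ih =>
    intro hd κ
    have hi1 : 1 ≤ N - (d + 1) := by omega
    have hiN : N - (d + 1) < N := by omega
    have hNd : N - d = N - (d + 1) + 1 := by omega
    have hsi : 0 ≤ s (N - (d + 1)) := hs0 _ hi1 hiN
    set i := N - (d + 1) with hidef
    set K := ∑ ℓ, ∑ c, η ℓ c * κ (c, ℓ) with hK
    set R' := ∏ j ∈ Finset.Ico (i + 1) N, s j with hR'
    set A := ∑ k ∈ Finset.Icc (i + 1) N, ∑ t, lam t *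
        max 0 (Finset.univ.sup' Finset.univ_nonempty (fun c : C =>
          (∏ j ∈ Finset.Ico (i + 1) k, s j) * p t - R' * ∑ ℓ, q t ℓ * η ℓ c)) with hA
    have ihκ : ∀ κ' : C × L → ℝ, lagJ lam p q s η N d κ'
        = A + R' * ∑ ℓ, ∑ c, η ℓ c * κ' (c, ℓ) := by
      intro κ'
      rw [ih (by omega) κ', hNd]
    have hb : lagJ lam p q s η N (d + 1) κ = ∑ t, Finset.univ.sup' Finset.univ_nonempty
        (fun o : Option C => lam t * ((if o = none then 0 else p t) +
          s i * lagJ lam p q s η N d (κ - lagDelta q t o))) := by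
      rw [lagJ]
      exact lagAux_sSup_sum_eq (fun t (o : Option C) => lam t * ((if o = none then 0 else p t) +
          s i * lagJ lam p q s η N d (κ - lagDelta q t o)))
    have hpt : ∀ t, Finset.univ.sup' Finset.univ_nonempty
        (fun o : Option C => lam t * ((if o = none then 0 else p t) +
          s i * lagJ lam p q s η N d (κ - lagDelta q t o)))
        = lam t * (max 0 (Finset.univ.sup' Finset.univ_nonempty
            (fun c : C => p t - s i * R' * ∑ ℓ, q t ℓ * η ℓ c)) + s i * (A + R' * K)) := by
      intro t
      have heq : (fun o : Option C => lam t * ((if o = none then 0 else p t) +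
          s i * lagJ lam p q s η N d (κ - lagDelta q t o)))
          = (fun o : Option C => lam t * ((if o = none then 0 else p t) +
            (s i * (A + R' * K) - o.elim 0 (fun c => s i * R' * ∑ ℓ, q t ℓ * η ℓ c)))) := by
        funext o
        rw [ihκ, lagAux_inner_step]
        rcases o with _ | c0
        · simp [hK]
        · simp only [Option.elim, hK]
          ring_nf
      rw [heq]
      exact lagAux_optionSup (lam t) (p t) _ (hlam t) _
    rw [hb]
    simp only [hpt]
    -- now pure algebra on the RHS
    have hprod : ∏ j ∈ Finset.Ico i N, s j = s i * R' :=
      Finset.prod_eq_prod_Ico_succ_bot hiN s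
    have hsplit : ∑ k ∈ Finset.Icc i N, ∑ t, lam t *
          max 0 (Finset.univ.sup' Finset.univ_nonempty (fun c : C =>
            (∏ j ∈ Finset.Ico i k, s j) * p t
              - (∏ j ∈ Finset.Ico i N, s j) * ∑ ℓ, q t ℓ * η ℓ c))
        = (∑ t, lam t * max 0 (Finset.univ.sup' Finset.univ_nonempty
            (fun c : C => p t - s i * R' * ∑ ℓ, q t ℓ * η ℓ c))) + s i * A := by
      rw [Finset.Icc_eq_cons_Ioc hiN.le, Finset.sum_cons, ← Finset.Icc_add_one_left_eq_Ioc]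
      congr 1
      · refine Finset.sum_congr rfl fun t _ => ?_
        rw [Finset.Ico_self, Finset.prod_empty, hprod]
        simp
      · rw [hA, Finset.mul_sum]
        refine Finset.sum_congr rfl fun k hk => ?_
        have hik : i < k := by
          have := (Finset.mem_Icc.mp hk).1; omega
        rw [Finset.mul_sum]
        refine Finset.sum_congr rfl fun t _ => ?_
        rw [← mul_assoc, mul_comm (s i) (lam t), mul_assoc]
        congr 1
        rw [mul_max_of_nonneg _ _ hsi, mul_zero]
        congr 1
        rw [lagAux_mul_sup' _ _ _ hsi]
        refine Finset.sup'_congr _ rfl fun c _ => ?_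
        rw [hprod, Finset.prod_eq_prod_Ico_succ_bot hik s]
        ring
    rw [hsplit, hprod]
    simp only [mul_add, Finset.sum_add_distrib, ← Finset.sum_mul, hlamsum]
    ring

/-- Closed form of the Lagrangian-relaxed dynamic program: with arrival probabilities
`λ_t ≥ 0` summing to `1`, fares `p_t ≥ 0`, resource consumptions `q_{t,ℓ} ≥ 0`, survival
probabilities `s_j ∈ [0,1]` for `1 ≤ j < N`, multipliers `η_{ℓ,c} ≥ 0` and horizon `N ≥ 1`,
for every stage `1 ≤ i ≤ N` and every capacity vector `κ`,
`Ĵ(κ, i) = ∑_{k=i}^{N} ∑_t λ_t·max(0, max_c((∏_{j=i}^{k−1} s_j)·p_t −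
  R_i·∑_ℓ q_{t,ℓ}·η_{ℓ,c})) + R_i·∑_ℓ ∑_c η_{ℓ,c}·κ_{c,ℓ}` where `R_i = ∏_{j=i}^{N−1} s_j`
(so `R_N = 1` and the empty product in the `k = i` summand is `1`). -/
theorem lagJ_closed_form {T C L : Type*}
    [Fintype T] [Nonempty T] [Fintype C] [Nonempty C] [DecidableEq C]
    [Fintype L] [Nonempty L]
    (lam p : T → ℝ) (hlam : ∀ t, 0 ≤ lam t) (hlamsum : ∑ t, lam t = 1)
    (hp : ∀ t, 0 ≤ p t)
    (q : T → L → ℝ) (hq : ∀ t ℓ, 0 ≤ q t ℓ)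
    (N : ℕ) (hN : 1 ≤ N)
    (s : ℕ → ℝ) (hs0 : ∀ j, 1 ≤ j → j < N → 0 ≤ s j) (hs1 : ∀ j, 1 ≤ j → j < N → s j ≤ 1)
    (η : L → C → ℝ) (hη : ∀ ℓ c, 0 ≤ η ℓ c)
    (i : ℕ) (hi1 : 1 ≤ i) (hiN : i ≤ N) (κ : C × L → ℝ) :
    lagJ lam p q s η N (N - i) κ
      = (∑ k ∈ Finset.Icc i N, ∑ t, lam t *
          max 0 (Finset.univ.sup' Finset.univ_nonempty (fun c : C =>
            (∏ j ∈ Finset.Ico i k, s j) * p t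
              - (∏ j ∈ Finset.Ico i N, s j) * ∑ ℓ, q t ℓ * η ℓ c)))
        + (∏ j ∈ Finset.Ico i N, s j) * ∑ ℓ, ∑ c, η ℓ c * κ (c, ℓ) := by
  have h := lagJ_key lam p hlam hlamsum q N s hs0 η (N - i) (by omega) κ
  rwa [Nat.sub_sub_self hiN] at h
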